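/- For each integer r ≥ 3 and every set S of column indices of the matrix H_r, the columns of H_r indexed by S are linearly independent over ℚ if and only if their entrywise reductions modulo 3 are linearly independent over the field ℤ/3ℤ. (Equivalently, the vector matroids of H_r over ℝ and over GF(3) coincide.) -/

import Mathlib

/-- Index set for the columns of `D_r`: pairs `(i, j)` of rows with `i < j`.
There are `r.choose 2` such pairs. -/
abbrev PairIdx (r : ℕ) := {p : Fin r × Fin r // p.1 < p.2}

/-- The matrix `H_r = [I_r | D_r | v]`, where the columns of `D_r` are the vectors
`e_i - e_j` for `i < j`, and `v = e_1 - e_2 - e_3`. -/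
def Hmat (r : ℕ) : Matrix (Fin r) (Fin r ⊕ PairIdx r ⊕ Unit) ℤ :=
  fun i j =>
    match j with
    | Sum.inl k => if i = k then 1 else 0
    | Sum.inr (Sum.inl p) => (if i = p.1.1 then 1 else 0) + (if i = p.1.2 then -1 else 0)
    | Sum.inr (Sum.inr _) =>
        (if (i : ℕ) = 0 then 1 else 0) - (if (i : ℕ) = 1 then 1 else 0)
          - (if (i : ℕ) = 2 then 1 else 0)

open Matrix Submodule Module

/-- A "good" integer column: entries in `{-1,0,1}`, at most one `1`, at most one `-1`. -/
def GoodCol {m : Type*} (w : m → ℤ) : Prop :=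
  (∀ i, w i = 0 ∨ w i = 1 ∨ w i = -1) ∧
  (∀ i j, w i = 1 → w j = 1 → i = j) ∧
  (∀ i j, w i = -1 → w j = -1 → i = j)

lemma goodCol_comp {m m' : Type*} {w : m → ℤ} (h : GoodCol w) {g : m' → m}
    (hg : Function.Injective g) : GoodCol (fun k => w (g k)) :=
  ⟨fun i => h.1 _, fun i j hi hj => hg (h.2.1 _ _ hi hj),
    fun i j hi hj => hg (h.2.2 _ _ hi hj)⟩

/-- Total unimodularity style lemma: a square integer matrix each of whose columns is
good has determinant in `{-1,0,1}`. -/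
lemma tu_det : ∀ (m : ℕ) (A : Matrix (Fin m) (Fin m) ℤ),
    (∀ j, GoodCol (fun i => A i j)) → A.det = 0 ∨ A.det = 1 ∨ A.det = -1 := by
  intro m
  induction m with
  | zero =>
    intro A _
    right; left
    simp [Matrix.det_fin_zero]
  | succ n ih =>
    intro A hA
    by_cases h0 : ∃ j, ∀ i, A i j = 0
    · obtain ⟨j, hj⟩ := h0
      exact Or.inl (det_eq_zero_of_column_eq_zero j hj)
    by_cases h1 : ∃ j i0, A i0 j ≠ 0 ∧ ∀ i, i ≠ i0 → A i j = 0
    · obtain ⟨j, i0, hi0, hrest⟩ := h1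
      rw [det_succ_column A j, Finset.sum_eq_single i0]
      · have hsub : ∀ jj, GoodCol (fun i => (A.submatrix i0.succAbove j.succAbove) i jj) :=
          fun jj => goodCol_comp (hA (j.succAbove jj)) (Fin.succAbove_right_injective)
        have hmin := ih _ hsub
        have hsign : (-1 : ℤ) ^ ((i0 : ℕ) + (j : ℕ)) = 1 ∨
            (-1 : ℤ) ^ ((i0 : ℕ) + (j : ℕ)) = -1 := by
          rcases Nat.even_or_odd ((i0 : ℕ) + (j : ℕ)) with h | h
          · exact Or.inl h.neg_one_pow
          · exact Or.inr h.neg_one_pow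
        have hval : A i0 j = 1 ∨ A i0 j = -1 := by
          rcases (hA j).1 i0 with h | h | h
          · exact absurd h hi0
          · exact Or.inl h
          · exact Or.inr h
        rcases hsign with hs | hs <;> rcases hval with hv | hv <;>
          rcases hmin with hm | hm | hm <;> rw [hs, hv, hm] <;> norm_num
      · intro i _ hne
        rw [hrest i hne]
        ring
      · intro h
        exact absurd (Finset.mem_univ i0) h
    · -- every column has a `1` and a `-1` and nothing else; rows sum to zero
      push_neg at h0 h1
      have hsum : ∀ j, ∑ i, A i j = 0 := by
        intro j
        obtain ⟨i1, hi1⟩ := h0 j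
        obtain ⟨i2, hne, hi2⟩ := h1 j i1 hi1
        have hzero : ∀ i, i ≠ i1 → i ≠ i2 → A i j = 0 := by
          intro i h1' h2'
          rcases (hA j).1 i with hc | hc | hc
          · exact hc
          all_goals rcases (hA j).1 i1 with ha | ha | ha <;>
            rcases (hA j).1 i2 with hb | hb | hb <;>
            first
              | exact absurd ha hi1
              | exact absurd hb hi2
              | exact absurd ((hA j).2.1 _ _ hc ha) h1'
              | exact absurd ((hA j).2.1 _ _ hc hb) h2'
              | exact absurd ((hA j).2.2 _ _ hc ha) h1'
              | exact absurd ((hA j).2.2 _ _ hc hb) h2'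
              | exact absurd ((hA j).2.1 _ _ hb ha) hne
              | exact absurd ((hA j).2.2 _ _ hb ha) hne
        have hab : A i1 j + A i2 j = 0 := by
          rcases (hA j).1 i1 with ha | ha | ha <;>
            rcases (hA j).1 i2 with hb | hb | hb <;>
            first
              | exact absurd ha hi1
              | exact absurd hb hi2
              | exact absurd ((hA j).2.1 _ _ hb ha) hne
              | exact absurd ((hA j).2.2 _ _ hb ha) hne
              | (show A i1 j + A i2 j = 0; simp only [] at ha hb; omega)
        calc ∑ i, A i j = ∑ i ∈ ({i1, i2} : Finset (Fin (n+1))), A i j := by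
              refine (Finset.sum_subset (Finset.subset_univ _) ?_).symm
              intro i _ hi
              simp only [Finset.mem_insert, Finset.mem_singleton] at hi
              push_neg at hi
              exact hzero i hi.1 hi.2
          _ = A i1 j + A i2 j := Finset.sum_pair (Ne.symm hne)
          _ = 0 := hab
      left
      have hQ : ((A.map (Int.cast : ℤ → ℚ)).det = 0) := by
        by_contra hd
        have hu : IsUnit (A.map (Int.cast : ℤ → ℚ)) :=
          (Matrix.isUnit_iff_isUnit_det _).mpr (isUnit_iff_ne_zero.mpr hd)
        have hli : LinearIndependent ℚ (fun i => (A.map (Int.cast : ℤ → ℚ)) i) :=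
          linearIndependent_rows_iff_isUnit.mpr hu
        have := Fintype.linearIndependent_iff.mp hli (fun _ => 1) ?_ ⟨0, Nat.succ_pos n⟩
        · exact one_ne_zero this
        · funext j
          simp only [one_smul, Finset.sum_apply, Matrix.map_apply, Pi.zero_apply]
          erw [Finset.sum_apply]
          simp only [Matrix.map_apply]
          exact_mod_cast congrArg (fun z : ℤ => (z : ℚ)) (hsum j)
      have hd := (Int.castRingHom ℚ).map_det A
      rw [RingHom.mapMatrix_apply, Int.coe_castRingHom, hQ] at hd
      exact_mod_cast (show ((A.det : ℤ) : ℚ) = 0 from hd)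

/-- Linear independence of the columns of a matrix over a field is equivalent to the
existence of a row selection with nonzero determinant. -/
lemma li_iff_det {K : Type*} [Field K] {r n : ℕ} (A : Matrix (Fin r) (Fin n) K) :
    LinearIndependent K (fun j : Fin n => fun i : Fin r => A i j) ↔
      ∃ g : Fin n → Fin r, (A.submatrix g id).det ≠ 0 := by
  constructor
  · intro h
    have hc : LinearIndependent K (fun j => Aᵀ j) := h
    have h1 : Aᵀ.rank = n := by
      rw [LinearIndependent.rank_matrix (M := Aᵀ) hc, Fintype.card_fin]
    have h2 : Aᵀ.rank = finrank K (span K (Set.range A)) := by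
      rw [rank_eq_finrank_span_cols, col_transpose]
      rfl
    have h3 : span K (Set.range A) = ⊤ := by
      apply Submodule.eq_top_of_finrank_eq
      rw [← h2, h1, Module.finrank_fin_fun]
    obtain ⟨t, hts, hspan, hli⟩ := exists_linearIndependent K (Set.range A)
    have htop : span K t = ⊤ := hspan.trans h3
    haveI : Fintype t := Set.Finite.fintype ((Set.finite_range A).subset hts)
    let b : Basis t K (Fin n → K) := Basis.mk hli (by rw [Subtype.range_coe]; exact htop.ge)
    have hcard : Fintype.card t = n := by
      rw [← Module.finrank_eq_card_basis b, Module.finrank_fin_fun]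
    let e2 : Fin n ≃ t := (Fintype.equivFinOfCardEq hcard).symm
    have hpre : ∀ x : t, ∃ i, A i = (x : Fin n → K) := fun x => hts x.2
    choose gi hgi using hpre
    refine ⟨fun k => gi (e2 k), ?_⟩
    have hrows : LinearIndependent K (fun k : Fin n => A (gi (e2 k))) := by
      have heq : (fun k : Fin n => A (gi (e2 k))) = (fun x : t => (x : Fin n → K)) ∘ e2 :=
        funext fun k => hgi (e2 k)
      rw [heq]
      exact hli.comp e2 e2.injective
    have hli2 : LinearIndependent K
        (fun k => (A.submatrix (fun k => gi (e2 k)) id) k) := hrows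
    have hu : IsUnit (A.submatrix (fun k => gi (e2 k)) id) :=
      linearIndependent_rows_iff_isUnit.mp hli2
    exact ((Matrix.isUnit_iff_isUnit_det _).mp hu).ne_zero
  · rintro ⟨g, hg⟩
    have hu : IsUnit (A.submatrix g id) :=
      (Matrix.isUnit_iff_isUnit_det _).mpr (isUnit_iff_ne_zero.mpr hg)
    have hcols : LinearIndependent K (fun j => (A.submatrix g id)ᵀ j) :=
      linearIndependent_cols_iff_isUnit.mpr hu
    apply LinearIndependent.of_comp (LinearMap.funLeft K K g)
    convert hcols using 1
    rfl

/-- The `a`-th standard basis column (as a `{0,1}` vector given by comparing values). -/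
def unitv (r a : ℕ) : Fin r → ℤ := fun i => if (i : ℕ) = a then 1 else 0

lemma goodCol_unitv_sub (r a b : ℕ) :
    GoodCol (fun i : Fin r => unitv r a i - unitv r b i) := by
  refine ⟨fun i => ?_, fun i j hi hj => ?_, fun i j hi hj => ?_⟩
  · simp only [unitv]; split_ifs <;> omega
  · have hia : (i : ℕ) = a := by
      by_contra hcon
      simp only [unitv] at hi
      split_ifs at hi <;> omega
    have hja : (j : ℕ) = a := by
      by_contra hcon
      simp only [unitv] at hj
      split_ifs at hj <;> omega
    exact Fin.ext (hia.trans hja.symm)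
  · have hib : (i : ℕ) = b := by
      by_contra hcon
      simp only [unitv] at hi
      split_ifs at hi <;> omega
    have hjb : (j : ℕ) = b := by
      by_contra hcon
      simp only [unitv] at hj
      split_ifs at hj <;> omega
    exact Fin.ext (hib.trans hjb.symm)



open Matrix in
/-- Pointwise descriptions of the identity and difference columns of `Hmat`. -/
lemma hmat_col_inl (r : ℕ) (k : Fin r) (i : Fin r) :
    Hmat r i (Sum.inl k) = unitv r k.1 i - unitv r r i := by
  have hi := i.isLt
  show (if i = k then (1 : ℤ) else 0) = _
  simp only [unitv, Fin.ext_iff]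
  split_ifs <;> omega

lemma hmat_col_pair (r : ℕ) (p : PairIdx r) (i : Fin r) :
    Hmat r i (Sum.inr (Sum.inl p)) = unitv r p.1.1.1 i - unitv r p.1.2.1 i := by
  have hp : p.1.1.1 ≠ p.1.2.1 := Fin.val_ne_of_ne (ne_of_lt p.2)
  show (if i = p.1.1 then (1 : ℤ) else 0) + (if i = p.1.2 then -1 else 0) = _
  simp only [unitv, Fin.ext_iff]
  split_ifs <;> omega

lemma hmat_col_v (r : ℕ) (u : Unit) (i : Fin r) :
    Hmat r i (Sum.inr (Sum.inr u)) =
      (unitv r 0 i - unitv r 1 i) + (-1 : ℤ) * unitv r 2 i := by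
  show (if (i : ℕ) = 0 then (1 : ℤ) else 0) - (if (i : ℕ) = 1 then 1 else 0)
      - (if (i : ℕ) = 2 then 1 else 0) = _
  simp only [unitv]
  split_ifs <;> omega

/-- For every set `S` of columns of `H_r`, the columns indexed by `S` are linearly
independent over `ℚ` if and only if their reductions modulo `3` are linearly
independent over `ZMod 3`; i.e. the vector matroids of `H_r` over `ℝ` and `GF(3)`
coincide. -/
theorem statement5 (r : ℕ) (hr : 3 ≤ r) (S : Set (Fin r ⊕ PairIdx r ⊕ Unit)) :
    LinearIndependent ℚ (fun c : S => fun i : Fin r => ((Hmat r i c.1 : ℤ) : ℚ)) ↔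
    LinearIndependent (ZMod 3)
      (fun c : S => fun i : Fin r => ((Hmat r i c.1 : ℤ) : ZMod 3)) := by
  classical
  haveI : Fintype S := S.toFinite.fintype
  set n := Fintype.card S with hn
  set e : Fin n ≃ S := (Fintype.equivFin ↥S).symm with he
  set A : Matrix (Fin r) (Fin n) ℤ := Matrix.of (fun i l => Hmat r i (e l).1) with hA
  -- the key reduction, valid over any field
  have key : ∀ (K : Type) [Field K],
      LinearIndependent K (fun c : S => fun i : Fin r => ((Hmat r i c.1 : ℤ) : K)) ↔
        ∃ g : Fin n → Fin r, (((A.submatrix g id).det : ℤ) : K) ≠ 0 := by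
    intro K _
    have hdet : ∀ M : Matrix (Fin n) (Fin n) ℤ,
        (M.map (Int.cast : ℤ → K)).det = ((M.det : ℤ) : K) := by
      intro M
      have h := (Int.castRingHom K).map_det M
      rw [RingHom.mapMatrix_apply, Int.coe_castRingHom] at h
      exact h.symm
    have hcomp : ((fun c : S => fun i : Fin r => ((Hmat r i c.1 : ℤ) : K)) ∘ e) =
        (fun l : Fin n => fun i : Fin r => (A.map (Int.cast : ℤ → K)) i l) := rfl
    rw [← linearIndependent_equiv e, hcomp, li_iff_det]
    refine exists_congr fun g => ?_
    rw [Matrix.submatrix_map, hdet]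
  -- the determinant of any row-selected square submatrix lies in [-2, 2]
  have hbd : ∀ g : Fin n → Fin r,
      -2 ≤ (A.submatrix g id).det ∧ (A.submatrix g id).det ≤ 2 := by
    intro g
    by_cases hg : Function.Injective g
    · -- good columns for the non-`v` columns
      have goodB : ∀ l : Fin n, (∀ u : Unit, (e l).1 ≠ Sum.inr (Sum.inr u)) →
          GoodCol (fun k => Hmat r (g k) (e l).1) := by
        intro l hl
        rcases hc : (e l).1 with k | p | u
        · have heq : (fun k' => Hmat r (g k') (Sum.inl k)) =
              fun k' => (fun i => unitv r k.1 i - unitv r r i) (g k') :=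
            funext fun k' => hmat_col_inl r k (g k')
          rw [heq]
          exact goodCol_comp (goodCol_unitv_sub r k.1 r) hg
        · have heq : (fun k' => Hmat r (g k') (Sum.inr (Sum.inl p))) =
              fun k' => (fun i => unitv r p.1.1.1 i - unitv r p.1.2.1 i) (g k') :=
            funext fun k' => hmat_col_pair r p (g k')
          rw [heq]
          exact goodCol_comp (goodCol_unitv_sub r p.1.1.1 p.1.2.1) hg
        · exact absurd hc (hl u)
      by_cases hv : ∃ l0 : Fin n, (e l0).1 = Sum.inr (Sum.inr ())
      · obtain ⟨l0, hl0⟩ := hv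
        set B := A.submatrix g id with hB
        set u : Fin n → ℤ := fun k => unitv r 0 (g k) - unitv r 1 (g k) with hu
        set w : Fin n → ℤ := fun k => unitv r 2 (g k) with hw
        have hcol : (fun k => B k l0) = u + (-1 : ℤ) • w := by
          funext k
          have hv2 := hmat_col_v r () (g k)
          simp only [hB, hA, Matrix.submatrix_apply, Matrix.of_apply, id, hl0, Pi.add_apply,
            Pi.smul_apply, smul_eq_mul, hu, hw]
          rw [hv2]
        have hsplit : B.det = (B.updateCol l0 u).det + (-1) * (B.updateCol l0 w).det := by
          conv_lhs => rw [← Matrix.updateCol_eq_self B l0]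
          rw [show (fun k => B k l0) = u + (-1 : ℤ) • w from hcol,
            Matrix.det_updateCol_add, Matrix.det_updateCol_smul]
        have hother : ∀ l : Fin n, l ≠ l0 → (∀ uu : Unit, (e l).1 ≠ Sum.inr (Sum.inr uu)) := by
          intro l hne uu huu
          apply hne
          apply e.injective
          apply Subtype.ext
          rw [huu, hl0]
        have hgoodu : ∀ l, GoodCol (fun k => (B.updateCol l0 u) k l) := by
          intro l
          by_cases hll : l = l0
          · subst hll
            have : (fun k => (B.updateCol l u) k l) = u := by
              funext k; rw [Matrix.updateCol_self]
            rw [this]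
            exact goodCol_comp (goodCol_unitv_sub r 0 1) hg
          · have : (fun k => (B.updateCol l0 u) k l) = fun k => Hmat r (g k) (e l).1 := by
              funext k
              rw [Matrix.updateCol_ne hll]
              rfl
            rw [this]
            exact goodB l (hother l hll)
        have hgoodw : ∀ l, GoodCol (fun k => (B.updateCol l0 w) k l) := by
          intro l
          by_cases hll : l = l0
          · subst hll
            have : (fun k => (B.updateCol l w) k l) = w := by
              funext k; rw [Matrix.updateCol_self]
            rw [this]
            have heq : w = fun k => (fun i => unitv r 2 i - unitv r r i) (g k) := by
              funext k
              have := (g k).isLt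
              simp only [hw, unitv]
              split_ifs <;> omega
            rw [heq]
            exact goodCol_comp (goodCol_unitv_sub r 2 r) hg
          · have : (fun k => (B.updateCol l0 w) k l) = fun k => Hmat r (g k) (e l).1 := by
              funext k
              rw [Matrix.updateCol_ne hll]
              rfl
            rw [this]
            exact goodB l (hother l hll)
        have h1 := tu_det n (B.updateCol l0 u) hgoodu
        have h2 := tu_det n (B.updateCol l0 w) hgoodw
        rw [hsplit]
        rcases h1 with h | h | h <;> rcases h2 with h' | h' | h' <;> rw [h, h'] <;> norm_num
      · have hgood : ∀ l, GoodCol (fun k => (A.submatrix g id) k l) := by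
          intro l
          have : (fun k => (A.submatrix g id) k l) = fun k => Hmat r (g k) (e l).1 := by
            funext k
            simp only [hA, Matrix.submatrix_apply, Matrix.of_apply, id]
          rw [this]
          exact goodB l (fun uu huu => hv ⟨l, by cases uu; exact huu⟩)
        rcases tu_det n (A.submatrix g id) hgood with h | h | h <;> rw [h] <;> norm_num
    · obtain ⟨k1, k2, hk, hne⟩ := Function.not_injective_iff.mp hg
      have hdet0 : (A.submatrix g id).det = 0 := by
        apply Matrix.det_zero_of_row_eq hne
        funext l
        simp only [Matrix.submatrix_apply, hk]
      rw [hdet0]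
      norm_num
  rw [key ℚ, key (ZMod 3)]
  refine exists_congr fun g => ?_
  obtain ⟨h1, h2⟩ := hbd g
  revert h1 h2
  generalize (A.submatrix g id).det = d
  intro h1 h2
  constructor
  · intro h
    rw [Int.cast_ne_zero] at h
    interval_cases d <;> first | exact absurd rfl h | decide
  · intro h
    rw [Int.cast_ne_zero]
    rintro rfl
    exact h (by norm_num)
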